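/- Let b ≥ 2 be an integer. The set A_b := {u·b^(3i) : u ≥ 1, i ≥ 0, b ∤ u} has natural asymptotic density b²/(b²+b+1), i.e. |A_b ∩ [1,n]| / n → b²/(b²+b+1) as n → ∞. -/

import Mathlib

open scoped Classical
open Finset

lemma count_eq (b : ℕ) (hb : 2 ≤ b) (n : ℕ) :
    ((Finset.Icc 1 n).filter
      (· ∈ {m : ℕ | ∃ u i : ℕ, 1 ≤ u ∧ ¬ b ∣ u ∧ m = u * b ^ (3 * i)})).card
      = ∑ j ∈ Finset.range (Nat.log b n + 1), (n / b ^ (3*j) - n / b ^ (3*j+1)) := by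
  have hb1 : 1 < b := hb
  have hbpos : 0 < b := by omega
  set M := Nat.log b n + 1 with hM
  have hset : (Finset.Icc 1 n).filter
      (· ∈ {m : ℕ | ∃ u i : ℕ, 1 ≤ u ∧ ¬ b ∣ u ∧ m = u * b ^ (3 * i)})
      = (Finset.range M).biUnion
        (fun j => (Finset.Ioc 0 n).filter (fun m => b ^ (3*j) ∣ m ∧ ¬ b ^ (3*j+1) ∣ m)) := by
    ext m
    simp only [Finset.mem_filter, Finset.mem_biUnion, Finset.mem_Icc, Finset.mem_Ioc,
      Finset.mem_range, Set.mem_setOf_eq]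
    constructor
    · rintro ⟨⟨hm1, hmn⟩, u, i, hu, hbu, rfl⟩
      have hpow : b ^ (3*i) ≤ u * b ^ (3*i) := Nat.le_mul_of_pos_left _ hu
      have hle : b ^ i ≤ n := le_trans (Nat.pow_le_pow_right hbpos (by omega))
        (le_trans hpow hmn)
      have hiM : i < M := by
        have : i ≤ Nat.log b n := (Nat.le_log_iff_pow_le hb1 (by omega)).mpr hle
        omega
      refine ⟨i, hiM, ⟨by omega, hmn⟩, dvd_mul_left _ u, ?_⟩
      rintro ⟨q, hq⟩
      apply hbu
      have : u * b ^ (3*i) = (q * b) * b ^ (3*i) := by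
        rw [hq, pow_succ]; ring
      have hu' : u = q * b := Nat.eq_of_mul_eq_mul_right (Nat.pow_pos hbpos) this
      rw [hu']; exact dvd_mul_left b q
    · rintro ⟨j, hj, ⟨hm0, hmn⟩, hdvd, hndvd⟩
      refine ⟨⟨by omega, hmn⟩, m / b ^ (3*j), j, ?_, ?_, (Nat.div_mul_cancel hdvd).symm⟩
      · have := Nat.div_pos (Nat.le_of_dvd hm0 hdvd) (Nat.pow_pos hbpos)
        omega
      · rintro ⟨q, hq⟩
        apply hndvd
        refine ⟨q, ?_⟩
        have := Nat.div_mul_cancel hdvd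
        rw [← this, hq, pow_succ]; ring
  rw [hset, Finset.card_biUnion]
  · apply Finset.sum_congr rfl
    intro j _
    have hsub : (Finset.Ioc 0 n).filter (fun m => b ^ (3*j+1) ∣ m)
        ⊆ (Finset.Ioc 0 n).filter (fun m => b ^ (3*j) ∣ m) := by
      intro m hm
      simp only [Finset.mem_filter] at hm ⊢
      exact ⟨hm.1, dvd_trans (pow_dvd_pow b (by omega)) hm.2⟩
    have : (Finset.Ioc 0 n).filter (fun m => b ^ (3*j) ∣ m ∧ ¬ b ^ (3*j+1) ∣ m)
        = (Finset.Ioc 0 n).filter (fun m => b ^ (3*j) ∣ m)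
          \ (Finset.Ioc 0 n).filter (fun m => b ^ (3*j+1) ∣ m) := by
      ext m
      simp only [Finset.mem_filter, Finset.mem_sdiff]
      tauto
    rw [this, Finset.card_sdiff_of_subset hsub, Nat.Ioc_filter_dvd_card_eq_div,
      Nat.Ioc_filter_dvd_card_eq_div]
  · intro j hj k hk hjk
    rw [Function.onFun, Finset.disjoint_left]
    intro m hm1 hm2
    simp only [Finset.mem_filter] at hm1 hm2
    rcases Nat.lt_or_ge j k with h | h
    · exact hm1.2.2 (dvd_trans (pow_dvd_pow b (by omega)) hm2.2.1)
    · have : k < j := by omega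
      exact hm2.2.2 (dvd_trans (pow_dvd_pow b (by omega)) hm1.2.1)

lemma est (b : ℕ) (hb : 2 ≤ b) (n : ℕ) :
    |(∑ j ∈ Finset.range (Nat.log b n + 1), ((n / b ^ (3*j) - n / b ^ (3*j+1) : ℕ) : ℝ))
      - (n:ℝ) * ((b:ℝ)^2/((b:ℝ)^2+(b:ℝ)+1))| ≤ (Nat.log b n : ℝ) + 2 := by
  have hbR : (1:ℝ) < (b:ℝ) := by exact_mod_cast hb
  have hb0 : (b:ℝ) ≠ 0 := by positivity
  have hb3 : (1:ℝ) < (b:ℝ)^3 := one_lt_pow₀ hbR (by norm_num)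
  set M := Nat.log b n + 1 with hM
  set x : ℝ := ((b:ℝ)^3)⁻¹ with hx
  have hx1 : x ≠ 1 := by
    rw [hx, ne_eq, inv_eq_one]; nlinarith
  have hxne : x - 1 ≠ 0 := sub_ne_zero.mpr hx1
  have hxpos : 0 < x := by positivity
  set d : ℝ := (b:ℝ)^2/((b:ℝ)^2+(b:ℝ)+1) with hd
  have hden : (0:ℝ) < (b:ℝ)^2+(b:ℝ)+1 := by positivity
  have hd0 : 0 ≤ d := by positivity
  have hd1 : d ≤ 1 := by rw [hd, div_le_one hden]; nlinarith
  -- per-term bound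
  have hfloor : ∀ m k : ℕ, 0 < k → (m:ℝ)/(k:ℝ) - 1 ≤ ((m / k : ℕ) : ℝ)
      ∧ ((m / k : ℕ) : ℝ) ≤ (m:ℝ)/(k:ℝ) := by
    intro m k hk
    have hkR : (0:ℝ) < (k:ℝ) := by exact_mod_cast hk
    constructor
    · have h1 : m < (m / k + 1) * k := (Nat.div_lt_iff_lt_mul hk).mp (Nat.lt_succ_self _)
      have h1R : (m:ℝ) < (((m/k : ℕ):ℝ) + 1) * k := by exact_mod_cast h1
      rw [sub_le_iff_le_add, div_le_iff₀ hkR]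
      nlinarith
    · exact Nat.cast_div_le
  have step1 : ∀ j : ℕ, |((n / b ^ (3*j) - n / b ^ (3*j+1) : ℕ) : ℝ)
      - (n:ℝ)*(1 - 1/(b:ℝ))*x^j| ≤ 1 := by
    intro j
    have hple : b ^ (3*j) ≤ b ^ (3*j+1) := Nat.pow_le_pow_right (by omega) (by omega)
    have hp1 : 0 < b ^ (3*j) := Nat.pow_pos (by omega)
    have hp2 : 0 < b ^ (3*j+1) := Nat.pow_pos (by omega)
    have hdivle : n / b ^ (3*j+1) ≤ n / b ^ (3*j) := Nat.div_le_div_left hple hp1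
    rw [Nat.cast_sub hdivle]
    have e1 : ((b ^ (3*j) : ℕ) : ℝ) = ((b:ℝ)^3)^j := by
      push_cast; rw [← pow_mul, mul_comm]
    have e2 : ((b ^ (3*j+1) : ℕ) : ℝ) = ((b:ℝ)^3)^j * b := by
      push_cast; rw [pow_succ, ← pow_mul, mul_comm 3 j]
    have hb1 := hfloor n (b ^ (3*j)) hp1
    have hb2 := hfloor n (b ^ (3*j+1)) hp2
    have hr : (n:ℝ)/((b ^ (3*j) : ℕ) : ℝ) - (n:ℝ)/((b ^ (3*j+1) : ℕ) : ℝ)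
        = (n:ℝ)*(1 - 1/(b:ℝ))*x^j := by
      rw [e1, e2, hx, inv_pow]
      have h3 : (((b:ℝ)^3)^j) ≠ 0 := by positivity
      field_simp
    rw [abs_le]
    constructor <;> nlinarith [hb1.1, hb1.2, hb2.1, hb2.2]
  -- sum bound
  have step2 : |(∑ j ∈ Finset.range M, ((n / b ^ (3*j) - n / b ^ (3*j+1) : ℕ) : ℝ))
      - ∑ j ∈ Finset.range M, (n:ℝ)*(1 - 1/(b:ℝ))*x^j| ≤ (M:ℝ) := by
    rw [← Finset.sum_sub_distrib]
    calc _ ≤ ∑ j ∈ Finset.range M, |((n / b ^ (3*j) - n / b ^ (3*j+1) : ℕ) : ℝ)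
        - (n:ℝ)*(1 - 1/(b:ℝ))*x^j| := Finset.abs_sum_le_sum_abs _ _
      _ ≤ ∑ j ∈ Finset.range M, 1 := Finset.sum_le_sum (fun j _ => step1 j)
      _ = (M:ℝ) := by simp
  -- geometric sum
  have key : ∀ y : ℝ, (1 - 1/(b:ℝ)) * ((y - 1)/(x - 1)) = d * (1 - y) := by
    intro y
    have key2 : (1 - 1/(b:ℝ)) * (y - 1) = d * (1 - y) * (x - 1) := by
      rw [hd, hx]
      field_simp
      ring
    rw [mul_div_assoc', key2, mul_div_cancel_right₀ _ hxne]
  have step3 : ∑ j ∈ Finset.range M, (n:ℝ)*(1 - 1/(b:ℝ))*x^j = (n:ℝ) * (d * (1 - x^M)) := by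
    have : ∀ j ∈ Finset.range M, (n:ℝ)*(1 - 1/(b:ℝ))*x^j
        = (n:ℝ) * ((1 - 1/(b:ℝ)) * x^j) := fun j _ => by ring
    rw [Finset.sum_congr rfl this, ← Finset.mul_sum, ← Finset.mul_sum, geom_sum_eq hx1,
      key (x^M)]
  have step4 : |(n:ℝ) * (d * (1 - x^M)) - (n:ℝ) * d| ≤ 1 := by
    have heq : (n:ℝ) * (d * (1 - x^M)) - (n:ℝ) * d = -((n:ℝ) * d * x^M) := by ring
    rw [heq, abs_neg, abs_of_nonneg (by positivity)]
    have hnlt : (n:ℝ) < (b:ℝ)^M := by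
      exact_mod_cast Nat.lt_pow_succ_log_self (by omega : 1 < b) n
    have hxM : x^M ≤ ((b:ℝ)^M)⁻¹ := by
      rw [hx, inv_pow, ← pow_mul]
      apply inv_anti₀ (by positivity)
      exact pow_le_pow_right₀ (by linarith) (by omega)
    have hbMpos : (0:ℝ) < (b:ℝ)^M := by positivity
    have h6 : (n:ℝ) * x^M ≤ 1 := by
      calc (n:ℝ)*x^M ≤ (b:ℝ)^M * ((b:ℝ)^M)⁻¹ :=
            mul_le_mul hnlt.le hxM (by positivity) (by positivity)
        _ = 1 := mul_inv_cancel₀ (ne_of_gt hbMpos)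
    have h7 : 0 ≤ (1-d)*((n:ℝ)*x^M) :=
      mul_nonneg (by linarith) (mul_nonneg (Nat.cast_nonneg n) (pow_nonneg hxpos.le M))
    nlinarith [h6, h7]
  calc |(∑ j ∈ Finset.range M, ((n / b ^ (3*j) - n / b ^ (3*j+1) : ℕ) : ℝ)) - (n:ℝ) * d|
      ≤ |(∑ j ∈ Finset.range M, ((n / b ^ (3*j) - n / b ^ (3*j+1) : ℕ) : ℝ))
        - ∑ j ∈ Finset.range M, (n:ℝ)*(1 - 1/(b:ℝ))*x^j|
      + |(∑ j ∈ Finset.range M, (n:ℝ)*(1 - 1/(b:ℝ))*x^j) - (n:ℝ) * d| := abs_sub_le _ _ _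
    _ ≤ (M:ℝ) + 1 := add_le_add step2 (by rw [step3]; exact step4)
    _ = (Nat.log b n : ℝ) + 2 := by rw [hM]; push_cast; ring
open scoped Classical

theorem stmt_4 (b : ℕ) (hb : 2 ≤ b)
    (A : Set ℕ) (hA : A = {m : ℕ | ∃ u i : ℕ, 1 ≤ u ∧ ¬ b ∣ u ∧ m = u * b ^ (3 * i)}) :
    Filter.Tendsto
      (fun n : ℕ => (((Finset.Icc 1 n).filter (· ∈ A)).card : ℝ) / n)
      Filter.atTop
      (nhds ((b : ℝ) ^ 2 / (b ^ 2 + b + 1))) := by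
  subst hA
  have hlog2 : (0:ℝ) < Real.log 2 := Real.log_pos (by norm_num)
  rw [tendsto_iff_dist_tendsto_zero]
  apply squeeze_zero' (Filter.Eventually.of_forall fun n => dist_nonneg)
    (g := fun n : ℕ => (Real.log n / Real.log 2 + 2) / n)
  · filter_upwards [Filter.eventually_ge_atTop 1] with n hn
    have hnpos : (0:ℝ) < n := by exact_mod_cast hn
    have hcount := count_eq b hb n
    simp only [Set.mem_setOf_eq] at hcount
    have hest := est b hb n
    rw [Real.dist_eq, hcount, Nat.cast_sum]
    set S := ∑ j ∈ Finset.range (Nat.log b n + 1),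
      ((n / b ^ (3*j) - n / b ^ (3*j+1) : ℕ) : ℝ) with hS
    set d : ℝ := (b:ℝ)^2/((b:ℝ)^2+(b:ℝ)+1) with hd
    have heq : S/(n:ℝ) - d = (S - (n:ℝ)*d)/(n:ℝ) := by field_simp
    rw [heq, abs_div, abs_of_pos hnpos]
    gcongr
    have h2 : ((Nat.log b n : ℕ) : ℝ) ≤ Real.log n / Real.log 2 := by
      have hp : ((b:ℕ):ℝ)^(Nat.log b n) ≤ (n:ℝ) := by
        exact_mod_cast Nat.pow_log_le_self b (by omega)
      have hl : (Nat.log b n : ℝ) * Real.log b ≤ Real.log n := by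
        calc (Nat.log b n : ℝ) * Real.log b = Real.log ((b:ℝ)^(Nat.log b n)) :=
              (Real.log_pow _ _).symm
          _ ≤ Real.log n := Real.log_le_log (by positivity) hp
      have hlb : Real.log 2 ≤ Real.log b :=
        Real.log_le_log (by norm_num) (by exact_mod_cast hb)
      rw [le_div_iff₀ hlog2]
      nlinarith [show (0:ℝ) ≤ ((Nat.log b n : ℕ):ℝ) from Nat.cast_nonneg _]
    linarith [hest, h2]
  · have t1 : Filter.Tendsto (fun n : ℕ => Real.log n / n) Filter.atTop (nhds 0) :=
      (Real.isLittleO_log_id_atTop.tendsto_div_nhds_zero).comp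
        tendsto_natCast_atTop_atTop
    have t2 := (t1.mul_const (Real.log 2)⁻¹).add (tendsto_const_div_atTop_nhds_zero_nat 2)
    simp only [zero_mul, add_zero] at t2
    exact t2.congr (fun n => by ring)
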